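/- Every permutation except the permutation of length 1 can be written as an inflation σ[α_1,…,α_m] of a unique simple permutation σ of length m ≥ 2. -/

import Mathlib

abbrev PermOf := Σ n : ℕ, Equiv.Perm (Fin n)

/-- A set of indices is contiguous. -/
def Contiguous {n : ℕ} (S : Finset (Fin n)) : Prop :=
  ∀ i j k : Fin n, i ∈ S → k ∈ S → i ≤ j → j ≤ k → j ∈ S

/-- An interval of `π`: a contiguous set of positions whose set of values is contiguous. -/
def IsPermInterval {n : ℕ} (π : Equiv.Perm (Fin n)) (S : Finset (Fin n)) : Prop :=
  Contiguous S ∧ Contiguous (S.image π)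

/-- A permutation of length `n` is simple if its only intervals have size `0`, `1` or `n`. -/
def IsSimple {n : ℕ} (π : Equiv.Perm (Fin n)) : Prop :=
  ∀ S : Finset (Fin n), IsPermInterval π S → S.card = 0 ∨ S.card = 1 ∨ S.card = n
/-- `π` is the inflation `σ[α 1, …, α m]`: there is a bijection between positions of `π`
and pairs (entry of `σ`, position inside that block) which identifies the position order
of `π` with the lexicographic order on blocks, and under which the value order of `π`
compares distinct blocks according to `σ` and entries within a block according to `α`. -/
def IsInflation {n m : ℕ} (π : Equiv.Perm (Fin n)) (σ : Equiv.Perm (Fin m))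
    (k : Fin m → ℕ) (α : ∀ i, Equiv.Perm (Fin (k i))) : Prop :=
  ∃ e : (Σ i : Fin m, Fin (k i)) ≃ Fin n,
    (∀ p q : Σ i : Fin m, Fin (k i),
      e p < e q ↔ (p.1 < q.1 ∨ ∃ _ : p.1 = q.1, (p.2 : ℕ) < (q.2 : ℕ))) ∧
    (∀ p q : Σ i : Fin m, Fin (k i),
      π (e p) < π (e q) ↔
        (σ p.1 < σ q.1 ∨ ∃ _ : p.1 = q.1, ((α p.1) p.2 : ℕ) < ((α q.1) q.2 : ℕ)))

namespace USI
open Finset Function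

variable {n m : ℕ}

/-- quotient map formulation of inflation -/
def IsQuot (π : Equiv.Perm (Fin n)) (σ : Equiv.Perm (Fin m)) (f : Fin n → Fin m) : Prop :=
  Monotone f ∧ Surjective f ∧ ∀ x y, f x ≠ f y → (π x < π y ↔ σ (f x) < σ (f y))

lemma mono_cross {f : Fin n → Fin m} (hf : Monotone f) {x y : Fin n} (h : f x ≠ f y) :
    x < y ↔ f x < f y := by
  constructor
  · intro hxy
    exact lt_of_le_of_ne (hf hxy.le) h
  · intro hxy
    by_contra hc
    exact absurd (hf (not_lt.mp hc)) (not_le.mpr hxy)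

lemma downset_mem_iff {D : Finset (Fin n)} (hD : ∀ x y : Fin n, x ≤ y → y ∈ D → x ∈ D)
    (x : Fin n) : x ∈ D ↔ (x : ℕ) < D.card := by
  constructor
  · intro hx
    have h1 : Finset.Iic x ⊆ D := fun y hy => hD y x (mem_Iic.mp hy) hx
    have := Finset.card_le_card h1
    rw [Fin.card_Iic] at this
    omega
  · intro hx
    by_contra hc
    have h1 : D ⊆ Finset.Iio x := by
      intro y hy
      rw [mem_Iio]
      by_contra hyx
      exact hc (hD x y (not_lt.mp hyx) hy)
    have := Finset.card_le_card h1
    rw [Fin.card_Iio] at this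
    omega

/-- a nonempty contiguous set is an interval [a, a+card) -/
lemma contiguous_char {S : Finset (Fin n)} (hS : Contiguous S) (hne : S.Nonempty) :
    ∃ a : ℕ, a + S.card ≤ n ∧ ∀ x : Fin n, x ∈ S ↔ a ≤ (x : ℕ) ∧ (x : ℕ) < a + S.card := by
  have hab : S = Finset.Icc (S.min' hne) (S.max' hne) := by
    apply Finset.ext
    intro x
    constructor
    · intro hx
      exact mem_Icc.mpr ⟨S.min'_le x hx, S.le_max' x hx⟩
    · intro hx
      rw [mem_Icc] at hx
      exact hS _ x _ (S.min'_mem hne) (S.max'_mem hne) hx.1 hx.2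
  have hle : ((S.min' hne : Fin n) : ℕ) ≤ ((S.max' hne : Fin n) : ℕ) :=
    S.min'_le _ (S.max'_mem hne)
  have hbn := (S.max' hne).isLt
  have hcard : S.card = ((S.max' hne : Fin n) : ℕ) + 1 - ((S.min' hne : Fin n) : ℕ) := by
    conv_lhs => rw [hab]
    exact Fin.card_Icc _ _
  have hmem : ∀ x : Fin n, x ∈ S ↔ ((S.min' hne : Fin n) : ℕ) ≤ (x : ℕ) ∧
      (x : ℕ) ≤ ((S.max' hne : Fin n) : ℕ) := by
    intro x
    conv_lhs => rw [hab]
    rw [mem_Icc, Fin.le_def, Fin.le_def]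
  refine ⟨((S.min' hne : Fin n) : ℕ), by omega, ?_⟩
  intro x
  rw [hmem x]
  omega

lemma card_filter_eq_sum {α : Type*} [Fintype α] [DecidableEq α] {g : α → Fin m}
    (I : Finset (Fin m)) :
    (univ.filter (fun x => g x ∈ I)).card = ∑ j ∈ I, (univ.filter (fun x => g x = j)).card := by
  rw [Finset.card_eq_sum_card_fiberwise (f := g) (s := univ.filter (fun x => g x ∈ I)) (t := I)
    (fun x hx => (mem_filter.mp hx).2)]
  apply Finset.sum_congr rfl
  intro j hj
  congr 1
  apply Finset.ext
  intro x
  simp only [mem_filter, mem_univ, true_and]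
  exact ⟨fun h => h.2, fun h => ⟨h ▸ hj, h⟩⟩

/-- two monotone maps on a finite linear order with equal fiber cardinalities agree -/
lemma mono_eq_of_fibers {α : Type*} [LinearOrder α] [Fintype α] [DecidableEq α]
    {g1 g2 : α → Fin m} (h1 : Monotone g1) (h2 : Monotone g2)
    (hc : ∀ i, (univ.filter (fun x => g1 x = i)).card = (univ.filter (fun x => g2 x = i)).card) :
    g1 = g2 := by
  have key : ∀ (g1 g2 : α → Fin m), Monotone g1 → Monotone g2 →
      (∀ i, (univ.filter (fun x => g1 x = i)).card = (univ.filter (fun x => g2 x = i)).card) →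
      ∀ x, ¬ (g1 x < g2 x) := by
    intro g1 g2 h1 h2 hc x hlt
    -- rank x < card filter (g1 ≤ g1 x) ≤ card filter (g2 < g2 x) ≤ rank x
    have e1 : (univ.filter (fun y => y < x)).card < (univ.filter (fun y => g1 y ≤ g1 x)).card := by
      apply Finset.card_lt_card
      constructor
      · intro y hy
        simp only [mem_filter, mem_univ, true_and]
        exact h1 (mem_filter.mp hy).2.le
      · intro hsub
        have := hsub (mem_filter.mpr ⟨mem_univ x, le_refl _⟩)
        simp at this
    have e2 : (univ.filter (fun y => g1 y ≤ g1 x)).card ≤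
        (univ.filter (fun y => g2 y < g2 x)).card := by
      have r1 : (univ.filter (fun y => g1 y ≤ g1 x)).card =
          (univ.filter (fun y => g1 y ∈ Finset.Iic (g1 x))).card := by
        congr 1; apply Finset.ext; intro y; simp
      have r2 : (univ.filter (fun y => g2 y < g2 x)).card =
          (univ.filter (fun y => g2 y ∈ Finset.Iio (g2 x))).card := by
        congr 1; apply Finset.ext; intro y; simp
      rw [r1, r2, card_filter_eq_sum, card_filter_eq_sum]
      rw [Finset.sum_congr rfl (fun j _ => hc j)]
      apply Finset.sum_le_sum_of_subset
      intro j hj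
      rw [mem_Iic] at hj
      rw [mem_Iio]
      exact lt_of_le_of_lt hj hlt
    have e3 : (univ.filter (fun y => g2 y < g2 x)).card ≤ (univ.filter (fun y => y < x)).card := by
      apply Finset.card_le_card
      intro y hy
      rw [mem_filter]
      refine ⟨mem_univ _, ?_⟩
      have := (mem_filter.mp hy).2
      by_contra hyx
      exact absurd (h2 (not_lt.mp hyx)) (not_le.mpr this)
    omega
  funext x
  rcases lt_trichotomy (g1 x) (g2 x) with h | h | h
  · exact absurd h (key g1 g2 h1 h2 hc x)
  · exact h
  · exact absurd h (key g2 g1 h2 h1 (fun i => (hc i).symm) x)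

/-- a strictly monotone self-map of Fin m is the identity -/
lemma strictMono_fin_id {h : Fin m → Fin m} (hh : StrictMono h) : h = id := by
  have hinj : Function.Injective h := hh.injective
  have hsurj : Function.Surjective h := Finite.injective_iff_surjective.mp hinj
  have : Set.range h = Set.range (id : Fin m → Fin m) := by
    rw [Set.range_id]
    exact Set.range_eq_univ.mpr hsurj
  exact (hh.range_inj strictMono_id).mp this


section Equivalence
variable {π : Equiv.Perm (Fin n)} {σ : Equiv.Perm (Fin m)}

lemma isQuot_of_isInflation {k : Fin m → ℕ} {α : ∀ i, Equiv.Perm (Fin (k i))}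
    (hk : ∀ i, 0 < k i) (h : IsInflation π σ k α) : ∃ f, IsQuot π σ f := by
  obtain ⟨e, he1, he2⟩ := h
  refine ⟨fun x => (e.symm x).1, ?_, ?_, ?_⟩
  · intro x y hxy
    rcases eq_or_lt_of_le hxy with h | h
    · subst h; exact le_refl _
    · have h' : e (e.symm x) < e (e.symm y) := by simpa using h
      rcases (he1 _ _).mp h' with h'' | ⟨h'', _⟩
      · exact h''.le
      · exact h''.le
  · intro i
    exact ⟨e ⟨i, ⟨0, hk i⟩⟩, by simp⟩
  · intro x y hxy
    have h2 := he2 (e.symm x) (e.symm y)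
    simp only [Equiv.apply_symm_apply] at h2
    rw [h2]
    constructor
    · rintro (h | ⟨h, _⟩)
      · exact h
      · exact absurd h hxy
    · intro h
      exact Or.inl h

lemma isInflation_of_isQuot {f : Fin n → Fin m} (h : IsQuot π σ f) :
    ∃ (k : Fin m → ℕ) (α : ∀ i, Equiv.Perm (Fin (k i))),
      (∀ i, 0 < k i) ∧ IsInflation π σ k α := by
  obtain ⟨hmono, hsurj, hcross⟩ := h
  set k : Fin m → ℕ := fun i => (univ.filter (fun x => f x = i)).card with hkdef
  have hkpos : ∀ i, 0 < k i := by
    intro i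
    obtain ⟨x, hx⟩ := hsurj i
    exact Finset.card_pos.mpr ⟨x, mem_filter.mpr ⟨mem_univ x, hx⟩⟩
  letI : Fintype (Σₗ i : Fin m, Fin (k i)) := (inferInstance : Fintype (Σ i : Fin m, Fin (k i)))
  have hcardSigma : Fintype.card (Σₗ i : Fin m, Fin (k i)) = n := by
    have h1 : Fintype.card (Σₗ i : Fin m, Fin (k i)) = ∑ i, k i := by
      rw [show Fintype.card (Σₗ i : Fin m, Fin (k i)) =
        Fintype.card (Σ i : Fin m, Fin (k i)) from rfl, Fintype.card_sigma]
      simp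
    have h2 : ∑ i, k i = n := by
      have := Finset.card_eq_sum_card_fiberwise
        (s := (univ : Finset (Fin n))) (t := (univ : Finset (Fin m))) (f := f)
        (fun x _ => mem_univ (f x))
      simp only [card_univ, Fintype.card_fin] at this
      rw [hkdef]
      exact this.symm
    rw [h1, h2]
  set E : (Σₗ i : Fin m, Fin (k i)) ≃o Fin n := (Fintype.orderIsoFinOfCardEq _ hcardSigma).symm
    with hEdef
  -- f ∘ E equals the first projection
  have hfibers1 : ∀ i, (univ.filter (fun p : Σₗ i : Fin m, Fin (k i) => f (E p) = i)).card = k i := by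
    intro i
    show _ = (univ.filter (fun x => f x = i)).card
    apply Finset.card_bij (fun p _ => E p)
    · intro p hp
      simp only [mem_filter, mem_univ, true_and] at hp ⊢
      exact hp
    · intro p _ q _ hpq
      exact E.injective hpq
    · intro x hx
      refine ⟨E.symm x, ?_, by simp⟩
      simp only [mem_filter, mem_univ, true_and, OrderIso.apply_symm_apply]
      exact (mem_filter.mp hx).2
  have hfibers2 : ∀ i, (univ.filter
      (fun p : Σₗ i : Fin m, Fin (k i) => (ofLex p).1 = i)).card = k i := by
    intro i
    conv_rhs => rw [show k i = (univ : Finset (Fin (k i))).card from by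
      rw [card_univ, Fintype.card_fin]]
    apply Finset.card_bij (fun p hp => Fin.cast (congrArg k (mem_filter.mp hp).2) (ofLex p).2)
    · intro p hp
      exact mem_univ _
    · intro p hp q hq hpq
      have hp1 := (mem_filter.mp hp).2
      have hq1 := (mem_filter.mp hq).2
      obtain ⟨p1, p2⟩ := p
      obtain ⟨q1, q2⟩ := q
      have hp2 : p1 = i := hp1
      have hq2 : q1 = i := hq1
      subst hp2
      subst hq2
      have hpq2 : p2 = q2 := Fin.ext (congrArg Fin.val hpq)
      rw [hpq2]
    · intro j _
      refine ⟨toLex ⟨i, j⟩, mem_filter.mpr ⟨mem_univ _, rfl⟩, rfl⟩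
  have hfe : ∀ p : Σₗ i : Fin m, Fin (k i), f (E p) = (ofLex p).1 := by
    have := mono_eq_of_fibers (α := Σₗ i : Fin m, Fin (k i))
      (g1 := fun p => f (E p)) (g2 := fun p => (ofLex p).1)
      (fun p q hpq => hmono (E.monotone hpq))
      (by
        intro p q hpq
        rcases eq_or_lt_of_le hpq with h | h
        · subst h; exact le_refl _
        · rcases Sigma.Lex.lt_def.mp h with h' | ⟨h', _⟩
          · exact h'.le
          · exact le_of_eq h')
      (fun i => (hfibers1 i).trans (hfibers2 i).symm)
    intro p
    exact congrFun this p
  -- the equivalence e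
  set e : (Σ i : Fin m, Fin (k i)) ≃ Fin n := (toLex (α := Σ i : Fin m, Fin (k i))).trans E.toEquiv
    with hedef
  have hee : ∀ p : Σ i : Fin m, Fin (k i), e p = E (toLex p) := fun p => rfl
  have he1 : ∀ p q : Σ i : Fin m, Fin (k i),
      e p < e q ↔ (p.1 < q.1 ∨ ∃ _ : p.1 = q.1, (p.2 : ℕ) < (q.2 : ℕ)) := by
    intro p q
    obtain ⟨p1, p2⟩ := p
    obtain ⟨q1, q2⟩ := q
    rw [hee, hee, E.lt_iff_lt, Sigma.Lex.lt_def]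
    constructor
    · rintro (h | ⟨h, h2⟩)
      · exact Or.inl h
      · have h' : p1 = q1 := h
        subst h'
        exact Or.inr ⟨rfl, h2⟩
    · rintro (h | ⟨h, h2⟩)
      · exact Or.inl h
      · have h' : p1 = q1 := h
        subst h'
        exact Or.inr ⟨rfl, h2⟩
  have hfe' : ∀ p : Σ i : Fin m, Fin (k i), f (e p) = p.1 := fun p => hfe (toLex p)
  -- build the α's
  have hv : ∀ i : Fin m, Function.Injective (fun j : Fin (k i) => π (e ⟨i, j⟩)) := by
    intro i j1 j2 hj
    simpa using e.injective (π.injective hj)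
  have halpha : ∀ i : Fin m, ∃ a : Equiv.Perm (Fin (k i)),
      ∀ j1 j2, ((a j1 : ℕ) < (a j2 : ℕ)) ↔ π (e ⟨i, j1⟩) < π (e ⟨i, j2⟩) := by
    intro i
    set v : Fin (k i) → Fin n := fun j => π (e ⟨i, j⟩) with hvdef
    have hV : (univ.image v).card = k i := by
      rw [Finset.card_image_of_injective _ (hv i), card_univ, Fintype.card_fin]
    set oi := (univ.image v).orderIsoOfFin hV with hoidef
    set b : Fin (k i) → (univ.image v : Finset (Fin n)) :=
      fun j => ⟨v j, mem_image.mpr ⟨j, mem_univ j, rfl⟩⟩ with hbdef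
    have hb : Function.Bijective b := by
      rw [Fintype.bijective_iff_injective_and_card]
      constructor
      · intro j1 j2 hj
        exact hv i (congrArg Subtype.val hj)
      · rw [Fintype.card_coe, hV, Fintype.card_fin]
    refine ⟨(Equiv.ofBijective b hb).trans oi.toEquiv.symm, ?_⟩
    intro j1 j2
    have key : ∀ j, oi ((Equiv.ofBijective b hb).trans oi.toEquiv.symm <| j) = b j := by
      intro j
      show oi (oi.toEquiv.symm (b j)) = b j
      exact oi.apply_symm_apply (b j)
    rw [← Fin.lt_def, ← OrderIso.lt_iff_lt oi, key j1, key j2]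
    exact Subtype.mk_lt_mk
  choose α hα using halpha
  refine ⟨k, α, hkpos, e, he1, ?_⟩
  intro p q
  rcases eq_or_ne p.1 q.1 with h | h
  · obtain ⟨p1, p2⟩ := p
    obtain ⟨q1, q2⟩ := q
    have h' : p1 = q1 := h
    subst h'
    constructor
    · intro hlt
      exact Or.inr ⟨rfl, (hα p1 p2 q2).mpr hlt⟩
    · rintro (hlt | ⟨_, hlt⟩)
      · exact absurd hlt (lt_irrefl _)
      · exact (hα p1 p2 q2).mp hlt
  · have hcr := hcross (e p) (e q) (by rw [hfe' p, hfe' q]; exact h)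
    rw [hfe' p, hfe' q] at hcr
    rw [hcr]
    constructor
    · intro hlt
      exact Or.inl hlt
    · rintro (hlt | ⟨h', _⟩)
      · exact hlt
      · exact absurd h' h
end Equivalence


section Structure
variable {π : Equiv.Perm (Fin n)} {σ : Equiv.Perm (Fin m)} {f : Fin n → Fin m}

/-- the induced map on values -/
def valMap (π : Equiv.Perm (Fin n)) (σ : Equiv.Perm (Fin m)) (f : Fin n → Fin m) :
    Fin n → Fin m := fun v => σ (f (π.symm v))

lemma valMap_apply (x : Fin n) : valMap π σ f (π x) = σ (f x) := by
  simp [valMap]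

lemma valMap_mono (h : IsQuot π σ f) : Monotone (valMap π σ f) := by
  obtain ⟨hmono, hsurj, hcross⟩ := h
  intro v w hvw
  rcases eq_or_lt_of_le hvw with hvw' | hvw'
  · subst hvw'; exact le_refl _
  by_cases hf : f (π.symm v) = f (π.symm w)
  · simp [valMap, hf]
  · have := (hcross _ _ hf).mp (by simpa using hvw')
    exact this.le

lemma valMap_surj (h : IsQuot π σ f) : Surjective (valMap π σ f) := by
  intro w
  obtain ⟨x, hx⟩ := h.2.1 (σ.symm w)
  exact ⟨π x, by simp [valMap_apply, hx]⟩

lemma mono_fiber_contiguous (hf : Monotone f) (i : Fin m) :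
    Contiguous (univ.filter (fun x => f x = i)) := by
  intro x y z hx hz hxy hyz
  rw [mem_filter] at hx hz ⊢
  refine ⟨mem_univ _, le_antisymm ?_ ?_⟩
  · rw [← hz.2]; exact hf hyz
  · rw [← hx.2]; exact hf hxy

lemma image_fiber (h : IsQuot π σ f) (i : Fin m) :
    (univ.filter (fun x => f x = i)).image π =
      univ.filter (fun v => valMap π σ f v = σ i) := by
  ext v
  simp only [mem_image, mem_filter, mem_univ, true_and]
  constructor
  · rintro ⟨x, hx, rfl⟩
    rw [valMap_apply, hx]
  · intro hv
    refine ⟨π.symm v, ?_, by simp⟩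
    have : σ (f (π.symm v)) = σ i := hv
    exact σ.injective this

lemma fiber_interval (h : IsQuot π σ f) (i : Fin m) :
    IsPermInterval π (univ.filter (fun x => f x = i)) := by
  refine ⟨mono_fiber_contiguous h.1 i, ?_⟩
  rw [image_fiber h i]
  exact mono_fiber_contiguous (valMap_mono h) (σ i)

lemma image_contiguous_of_mono (hf : Monotone f) (hs : Surjective f)
    {S : Finset (Fin n)} (hS : Contiguous S) : Contiguous (S.image f) := by
  intro i j k hi hk hij hjk
  rcases eq_or_lt_of_le hij with h | h
  · subst h; exact hi
  rcases eq_or_lt_of_le hjk with h' | h'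
  · rw [h']; exact hk
  obtain ⟨x, hx, hfx⟩ := mem_image.mp hi
  obtain ⟨y, hy, hfy⟩ := mem_image.mp hk
  obtain ⟨z, hz⟩ := hs j
  have h1 : x < z := by
    rw [mono_cross hf (by rw [hfx, hz]; exact h.ne)]
    rw [hfx, hz]; exact h
  have h2 : z < y := by
    rw [mono_cross hf (by rw [hfy, hz]; exact h'.ne)]
    rw [hfy, hz]; exact h'
  exact mem_image.mpr ⟨z, hS x z y hx hy h1.le h2.le, hz⟩

lemma fullSet_contiguous (hf : Monotone f) (hs : Surjective f)
    {S : Finset (Fin n)} (hS : Contiguous S) :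
    Contiguous (univ.filter (fun i => ∀ x, f x = i → x ∈ S)) := by
  intro i j k hi hk hij hjk
  rw [mem_filter] at hi hk ⊢
  refine ⟨mem_univ _, fun x hx => ?_⟩
  rcases eq_or_lt_of_le hij with h | h
  · subst h; exact hi.2 x hx
  rcases eq_or_lt_of_le hjk with h' | h'
  · subst h'; exact hk.2 x hx
  obtain ⟨xi, hxi⟩ := hs i
  obtain ⟨xk, hxk⟩ := hs k
  have h1 : xi < x := by
    rw [mono_cross hf (by rw [hxi, hx]; exact h.ne)]
    rw [hxi, hx]; exact h
  have h2 : x < xk := by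
    rw [mono_cross hf (by rw [hxk, hx]; exact h'.ne)]
    rw [hxk, hx]; exact h'
  exact hS xi x xk (hi.2 xi hxi) (hk.2 xk hxk) h1.le h2.le

lemma contiguous_fin3 {S : Finset (Fin 3)} (h : (1 : Fin 3) ∈ S) : Contiguous S := by
  intro i j k hi hk hij hjk
  have hi3 := i.isLt
  have hj3 := j.isLt
  have hk3 := k.isLt
  have hij' : (i : ℕ) ≤ j := hij
  have hjk' : (j : ℕ) ≤ k := hjk
  have : (j : ℕ) = i ∨ (j : ℕ) = (k : ℕ) ∨ (j : ℕ) = 1 := by omega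
  rcases this with h' | h' | h'
  · rwa [show j = i from Fin.ext h']
  · rwa [show j = k from Fin.ext h']
  · rwa [show j = (1 : Fin 3) from Fin.ext h']

lemma not_simple_three (σ : Equiv.Perm (Fin 3)) : ¬ IsSimple σ := by
  intro h
  by_cases h0 : σ 0 = 1
  · have him : ({0, 1} : Finset (Fin 3)).image σ = {σ 0, σ 1} := by
      simp [Finset.image_insert]
    have hc2 : Contiguous (({0, 1} : Finset (Fin 3)).image σ) := by
      rw [him]
      apply contiguous_fin3
      rw [← h0]
      simp
    have hS := h {0, 1} ⟨contiguous_fin3 (by decide), hc2⟩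
    exact absurd hS (by decide)
  · have h1 : (1 : Fin 3) ∈ ({σ 1, σ 2} : Finset (Fin 3)) := by
      have hy : σ (σ.symm 1) = 1 := σ.apply_symm_apply 1
      have hs0 : σ.symm (1 : Fin 3) ≠ 0 := fun hc => h0 (by rw [← hy, hc])
      have hv := (σ.symm (1 : Fin 3)).isLt
      have h0' : ((σ.symm (1 : Fin 3)) : ℕ) ≠ 0 := fun hc => hs0 (Fin.ext hc)
      have hor : ((σ.symm (1 : Fin 3)) : ℕ) = 1 ∨ ((σ.symm (1 : Fin 3)) : ℕ) = 2 := by omega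
      rcases hor with hh | hh
      · have h2 : σ.symm (1 : Fin 3) = 1 := Fin.ext hh
        rw [h2] at hy
        exact mem_insert.mpr (Or.inl hy.symm)
      · have h2 : σ.symm (1 : Fin 3) = 2 := Fin.ext hh
        rw [h2] at hy
        exact mem_insert.mpr (Or.inr (mem_singleton.mpr hy.symm))
    have him : ({1, 2} : Finset (Fin 3)).image σ = {σ 1, σ 2} := by
      simp [Finset.image_insert]
    have hc2 : Contiguous (({1, 2} : Finset (Fin 3)).image σ) := by
      rw [him]
      exact contiguous_fin3 h1
    have hS := h {1, 2} ⟨contiguous_fin3 (by decide), hc2⟩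
    exact absurd hS (by decide)

end Structure


section KeyTwo
variable {π : Equiv.Perm (Fin n)} {σ : Equiv.Perm (Fin m)} {f : Fin n → Fin m}

/-- If `π = σ[α]` with `σ` simple of length `m ≥ 2` and `π` has a proper interval not
contained in a single block, then `m = 2`. -/
lemma key_two (h : IsQuot π σ f) (hσ : IsSimple σ) (hm : 2 ≤ m)
    {S : Finset (Fin n)} (hint : IsPermInterval π S) (hSproper : S ≠ univ)
    (hnf : ¬ ∃ i, ∀ x ∈ S, f x = i) : m = 2 := by
  obtain ⟨hmono, hsurj, hcross⟩ := h
  have h' : IsQuot π σ f := ⟨hmono, hsurj, hcross⟩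
  have hgmono := valMap_mono h'
  have hgsurj := valMap_surj h'
  -- S is nonempty with two distinct f-values
  have hSne : S.Nonempty := by
    rcases S.eq_empty_or_nonempty with hc | hc
    · exfalso
      apply hnf
      refine ⟨⟨0, by omega⟩, fun x hx => ?_⟩
      rw [hc] at hx
      exact absurd hx (notMem_empty x)
    · exact hc
  obtain ⟨x0, hx0⟩ := hSne
  have h2v : ∃ y ∈ S, f y ≠ f x0 := by
    by_contra hc
    push_neg at hc
    exact hnf ⟨f x0, hc⟩
  obtain ⟨y0, hy0, hy0f⟩ := h2v
  -- the image f(S) is an interval of σ of cardinality ≥ 2, hence it is everything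
  have hT'int : IsPermInterval σ (S.image f) := by
    constructor
    · exact image_contiguous_of_mono hmono hsurj hint.1
    · have him : (S.image f).image σ = (S.image π).image (valMap π σ f) := by
        ext w
        simp only [mem_image]
        constructor
        · rintro ⟨i, hi, rfl⟩
          obtain ⟨x, hx, rfl⟩ := hi
          exact ⟨π x, ⟨x, hx, rfl⟩, valMap_apply x⟩
        · rintro ⟨v, hv, rfl⟩
          obtain ⟨x, hx, rfl⟩ := hv
          exact ⟨f x, ⟨x, hx, rfl⟩, (valMap_apply x).symm⟩
      rw [him]
      exact image_contiguous_of_mono hgmono hgsurj hint.2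
  have hT'card := hσ _ hT'int
  have hT'two : 2 ≤ (S.image f).card :=
    Finset.one_lt_card.mpr ⟨f x0, mem_image_of_mem f hx0, f y0, mem_image_of_mem f hy0,
      fun hc => hy0f hc.symm⟩
  have hT'univ : S.image f = univ := by
    rcases hT'card with hc | hc | hc
    · omega
    · omega
    · apply Finset.eq_univ_of_card
      rw [hc, Fintype.card_fin]
  -- the set T of indices whose fiber is contained in S is an interval of σ
  set T := univ.filter (fun i => ∀ x, f x = i → x ∈ S) with hTdef
  have hTint : IsPermInterval σ T := by
    constructor
    · exact fullSet_contiguous hmono hsurj hint.1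
    · have hTim : T.image σ =
          univ.filter (fun w => ∀ v, valMap π σ f v = w → v ∈ S.image π) := by
        ext w
        simp only [hTdef, mem_image, mem_filter, mem_univ, true_and]
        constructor
        · rintro ⟨i, hi, rfl⟩
          intro v hv
          have hfv : f (π.symm v) = i := σ.injective hv
          have : π.symm v ∈ S := hi (π.symm v) hfv
          exact ⟨π.symm v, this, π.apply_symm_apply v⟩
        · intro hw
          refine ⟨σ.symm w, fun x hx => ?_, σ.apply_symm_apply w⟩
          have hvw : valMap π σ f (π x) = w := by
            rw [valMap_apply, hx]
            exact σ.apply_symm_apply w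
          have hmem := hw (π x) hvw
          obtain ⟨y, hy, hyx⟩ := hmem
          rwa [← π.injective hyx]
      rw [hTim]
      exact fullSet_contiguous hgmono hgsurj hint.2
  have hTcard := hσ T hTint
  -- T is not everything
  have hTne : T ≠ univ := by
    intro hc
    apply hSproper
    apply Finset.eq_univ_of_forall
    intro x
    have : f x ∈ T := hc ▸ mem_univ (f x)
    rw [hTdef, mem_filter] at this
    exact this.2 x rfl
  have hTnecard : T.card ≠ m := by
    intro hc
    exact hTne (Finset.eq_univ_of_card _ (by rw [hc, Fintype.card_fin]))
  -- T contains all interior indices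
  have hTsub : ∀ i : Fin m, 0 < (i : ℕ) → (i : ℕ) < m - 1 → i ∈ T := by
    intro i hi1 hi2
    have h0m : (0 : ℕ) < m := by omega
    have hbot : (⟨0, h0m⟩ : Fin m) ∈ S.image f := hT'univ ▸ mem_univ _
    have htop : (⟨m - 1, by omega⟩ : Fin m) ∈ S.image f := hT'univ ▸ mem_univ _
    obtain ⟨xb, hxb, hxbf⟩ := mem_image.mp hbot
    obtain ⟨xt, hxt, hxtf⟩ := mem_image.mp htop
    rw [hTdef, mem_filter]
    refine ⟨mem_univ _, fun z hz => ?_⟩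
    have h1 : xb < z := by
      have hne : f xb ≠ f z := by
        rw [hxbf, hz]
        intro hc
        have hval : (0 : ℕ) = (i : ℕ) := congrArg Fin.val hc
        omega
      rw [mono_cross hmono hne, hxbf, hz, Fin.lt_def]
      exact hi1
    have h2 : z < xt := by
      have hne : f z ≠ f xt := by
        rw [hxtf, hz]
        intro hc
        have hval : (i : ℕ) = m - 1 := congrArg Fin.val hc
        omega
      rw [mono_cross hmono hne, hxtf, hz, Fin.lt_def]
      exact hi2
    exact hint.1 xb z xt hxb hxt h1.le h2.le
  -- therefore T has at least m - 2 elements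
  have hTbig : m - 2 ≤ T.card := by
    have hsub : Finset.Ico (⟨1, by omega⟩ : Fin m) ⟨m - 1, by omega⟩ ⊆ T := by
      intro i hi
      rw [mem_Ico] at hi
      have hi1 : (1 : ℕ) ≤ (i : ℕ) := hi.1
      have hi2 : (i : ℕ) < m - 1 := hi.2
      exact hTsub i (by omega) hi2
    have := Finset.card_le_card hsub
    rw [Fin.card_Ico] at this
    simpa using this
  -- conclude
  have hm3 : m ≤ 3 := by
    rcases hTcard with hc | hc | hc
    · omega
    · omega
    · omega
  rcases Nat.lt_or_ge m 3 with hc | hc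
  · omega
  · have hm3' : m = 3 := by omega
    exfalso
    subst hm3'
    exact not_simple_three σ hσ

end KeyTwo


section SumSkew
variable {π : Equiv.Perm (Fin n)} {σ : Equiv.Perm (Fin m)} {f : Fin n → Fin m}

def SumDec (π : Equiv.Perm (Fin n)) : Prop :=
  ∃ d, 0 < d ∧ d < n ∧ ∀ x : Fin n, ((x : ℕ) < d ↔ (π x : ℕ) < d)

def SkewDec (π : Equiv.Perm (Fin n)) : Prop :=
  ∃ d, 0 < d ∧ d < n ∧ ∀ x : Fin n, ((x : ℕ) < d ↔ n - d ≤ (π x : ℕ))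

lemma not_sum_and_skew (hn : 0 < n) : ¬ (SumDec π ∧ SkewDec π) := by
  rintro ⟨⟨d, hd0, hdn, hd⟩, ⟨d', hd'0, hd'n, hd'⟩⟩
  have h1 : (π ⟨0, hn⟩ : ℕ) < d := (hd ⟨0, hn⟩).mp hd0
  have h2 : n - d' ≤ (π ⟨0, hn⟩ : ℕ) := (hd' ⟨0, hn⟩).mp hd'0
  have h3 : ¬ ((π ⟨n - 1, by omega⟩ : ℕ) < d) := by
    rw [← hd ⟨n - 1, by omega⟩]
    simp only
    omega
  have h4 : ¬ (n - d' ≤ (π ⟨n - 1, by omega⟩ : ℕ)) := by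
    rw [← hd' ⟨n - 1, by omega⟩]
    simp only
    omega
  omega

lemma mono_surj_min (hf : Monotone f) (hs : Surjective f) (hn : 0 < n) :
    (f ⟨0, hn⟩ : ℕ) = 0 := by
  have hm0 : 0 < m := Fin.pos (f ⟨0, hn⟩)
  obtain ⟨y, hy⟩ := hs ⟨0, hm0⟩
  have hle : f ⟨0, hn⟩ ≤ f y := hf (by simp [Fin.le_def])
  rw [hy] at hle
  have h1 := Fin.le_def.mp hle
  have h2 : ((⟨0, hm0⟩ : Fin m) : ℕ) = 0 := rfl
  omega

lemma mono_surj_max (hf : Monotone f) (hs : Surjective f) (hn : 0 < n) (hm : 0 < m) :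
    (f ⟨n - 1, by omega⟩ : ℕ) = m - 1 := by
  obtain ⟨y, hy⟩ := hs ⟨m - 1, by omega⟩
  have : f y ≤ f ⟨n - 1, by omega⟩ := hf (by
    rw [Fin.le_def]
    simp only
    have := y.isLt
    omega)
  rw [hy] at this
  have h1 := Fin.le_def.mp this
  have h2 := (f ⟨n - 1, by omega⟩).isLt
  simp only at h1
  omega

/-- a quotient onto a permutation of length 2 forces a sum or skew decomposition -/
lemma quot_two {σ : Equiv.Perm (Fin 2)} {f : Fin n → Fin 2} (h : IsQuot π σ f)
    (hn : 0 < n) : (σ 0 = 0 ∧ SumDec π) ∨ (σ 0 = 1 ∧ SkewDec π) := by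
  obtain ⟨hmono, hsurj, hcross⟩ := h
  have h' : IsQuot π σ f := ⟨hmono, hsurj, hcross⟩
  set d := (univ.filter (fun x => f x = (0 : Fin 2))).card with hddef
  have hdown : ∀ x y : Fin n, x ≤ y → y ∈ univ.filter (fun x => f x = (0 : Fin 2)) →
      x ∈ univ.filter (fun x => f x = (0 : Fin 2)) := by
    intro x y hxy hy
    rw [mem_filter] at hy ⊢
    refine ⟨mem_univ _, ?_⟩
    have hle := Fin.le_def.mp (hmono hxy)
    have hy2 : (f y : ℕ) = 0 := congrArg Fin.val hy.2
    have h00 : (((0 : Fin 2)) : ℕ) = 0 := rfl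
    exact Fin.ext (by omega)
  have hmem0 : ∀ x : Fin n, f x = 0 ↔ (x : ℕ) < d := by
    intro x
    rw [hddef]
    have hiff := downset_mem_iff hdown x
    rw [mem_filter] at hiff
    constructor
    · intro hx
      exact hiff.mp ⟨mem_univ _, hx⟩
    · intro hx
      exact (hiff.mpr hx).2
  have hd0 : 0 < d := by
    obtain ⟨x, hx⟩ := hsurj 0
    have := (hmem0 x).mp hx
    omega
  have hdn : d < n := by
    obtain ⟨y, hy⟩ := hsurj 1
    have hyne : ¬ ((y : ℕ) < d) := by
      intro hc
      have h0 := (hmem0 y).mpr hc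
      exact absurd (h0.symm.trans hy) (by decide)
    have := y.isLt
    omega
  -- the value-side fiber of 0
  have hgdown : ∀ x y : Fin n, x ≤ y →
      y ∈ univ.filter (fun v => valMap π σ f v = (0 : Fin 2)) →
      x ∈ univ.filter (fun v => valMap π σ f v = (0 : Fin 2)) := by
    intro x y hxy hy
    rw [mem_filter] at hy ⊢
    refine ⟨mem_univ _, ?_⟩
    have hle := Fin.le_def.mp (valMap_mono h' hxy)
    have hy2 : (valMap π σ f y : ℕ) = 0 := congrArg Fin.val hy.2
    exact Fin.ext (by omega)
  set c := (univ.filter (fun v => valMap π σ f v = (0 : Fin 2))).card with hcdef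
  have hmemg : ∀ v : Fin n, valMap π σ f v = 0 ↔ (v : ℕ) < c := by
    intro v
    rw [hcdef]
    have hiff := downset_mem_iff hgdown v
    rw [mem_filter] at hiff
    constructor
    · intro hx
      exact hiff.mp ⟨mem_univ _, hx⟩
    · intro hx
      exact (hiff.mpr hx).2
  have hσ0 : σ 0 = 0 ∨ σ 0 = 1 := by
    have hlt2 := (σ 0).isLt
    rcases (by omega : ((σ 0 : Fin 2) : ℕ) = 0 ∨ ((σ 0 : Fin 2) : ℕ) = 1) with h | h
    · exact Or.inl (Fin.ext h)
    · exact Or.inr (Fin.ext h)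
  rcases hσ0 with h00 | h01
  · -- sum case
    left
    refine ⟨h00, d, hd0, hdn, ?_⟩
    have hcd : c = d := by
      rw [hcdef, hddef]
      have him : univ.filter (fun v => valMap π σ f v = (0 : Fin 2)) =
          (univ.filter (fun x => f x = (0 : Fin 2))).image π := by
        ext v
        simp only [mem_image, mem_filter, mem_univ, true_and]
        constructor
        · intro hv
          refine ⟨π.symm v, ?_, π.apply_symm_apply v⟩
          apply σ.injective
          rw [← h00] at hv
          exact hv
        · rintro ⟨x, hx, rfl⟩
          rw [valMap_apply, hx, h00]
      rw [him, Finset.card_image_of_injective _ π.injective]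
    intro x
    have hx1 : ((x : ℕ) < d) ↔ f x = 0 := (hmem0 x).symm
    have hx2 : f x = 0 ↔ valMap π σ f (π x) = 0 := by
      rw [valMap_apply]
      constructor
      · intro hf0
        rw [hf0, h00]
      · intro hg0
        apply σ.injective
        rw [hg0, h00]
    rw [hx1, hx2, hmemg (π x), hcd]
  · -- skew case
    right
    refine ⟨h01, d, hd0, hdn, ?_⟩
    have h10 : σ 1 = 0 := by
      have hne : σ 1 ≠ σ 0 := fun hc => absurd (σ.injective hc) (by decide)
      rw [h01] at hne
      have hlt := (σ 1).isLt
      have hne' : ((σ 1 : Fin 2) : ℕ) ≠ 1 := fun hc => hne (Fin.ext hc)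
      exact Fin.ext (by omega)
    have hcnd : c = n - d := by
      have him : univ.filter (fun v => valMap π σ f v = (0 : Fin 2)) =
          (univ.filter (fun x => f x = (1 : Fin 2))).image π := by
        ext v
        simp only [mem_image, mem_filter, mem_univ, true_and]
        constructor
        · intro hv
          refine ⟨π.symm v, ?_, π.apply_symm_apply v⟩
          apply σ.injective
          rw [← h10] at hv
          exact hv
        · rintro ⟨x, hx, rfl⟩
          rw [valMap_apply, hx, h10]
      have hpart : (univ.filter (fun x => f x = (0 : Fin 2))).card +
          (univ.filter (fun x => f x = (1 : Fin 2))).card = n := by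
        have hneq : univ.filter (fun x => f x = (1 : Fin 2)) =
            univ.filter (fun x => ¬ (f x = (0 : Fin 2))) := by
          ext x
          simp only [mem_filter, mem_univ, true_and]
          constructor
          · intro hx hc
            exact absurd (hc.symm.trans hx) (by decide)
          · intro hx
            have hlt := (f x).isLt
            have hne' : ((f x : Fin 2) : ℕ) ≠ 0 := fun hc => hx (Fin.ext hc)
            exact Fin.ext (by omega)
        rw [hneq]
        rw [Finset.card_filter_add_card_filter_not]
        · rw [card_univ, Fintype.card_fin]
      rw [hcdef, him, Finset.card_image_of_injective _ π.injective, hddef] at *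
      omega
    intro x
    have hx1 : ((x : ℕ) < d) ↔ f x = 0 := (hmem0 x).symm
    have hx2 : f x = 0 ↔ ¬ (f x = 1) := by
      constructor
      · intro hf0 hc
        exact absurd (hf0.symm.trans hc) (by decide)
      · intro hx
        have hlt := (f x).isLt
        have hne' : ((f x : Fin 2) : ℕ) ≠ 1 := fun hc => hx (Fin.ext hc)
        exact Fin.ext (by omega)
    have hx3 : f x = 1 ↔ valMap π σ f (π x) = 0 := by
      rw [valMap_apply]
      constructor
      · intro hf1
        rw [hf1, h10]
      · intro hg0
        apply σ.injective
        rw [hg0, h10]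
    have hx4 := hmemg (π x)
    have hlt := (π x).isLt
    rw [hx1, hx2]
    rw [hx3, hx4, hcnd]
    omega

end SumSkew


section Forces
variable {π : Equiv.Perm (Fin n)} {σ : Equiv.Perm (Fin m)} {f : Fin n → Fin m}

lemma perm2_refl {σ : Equiv.Perm (Fin 2)} (h : σ 0 = 0) : σ = Equiv.refl (Fin 2) := by
  have h1 : σ 1 = 1 := by
    have hne : σ 1 ≠ σ 0 := fun hc => absurd (σ.injective hc) (by decide)
    rw [h] at hne
    have hlt := (σ 1).isLt
    have hne' : ((σ 1 : Fin 2) : ℕ) ≠ 0 := fun hc => hne (Fin.ext hc)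
    exact Fin.ext (by omega)
  apply Equiv.ext
  intro x
  have hlt := x.isLt
  rcases (by omega : ((x : Fin 2) : ℕ) = 0 ∨ ((x : Fin 2) : ℕ) = 1) with hx | hx
  · rw [show x = 0 from Fin.ext hx]
    exact h
  · rw [show x = 1 from Fin.ext hx]
    exact h1

lemma perm2_swap {σ : Equiv.Perm (Fin 2)} (h : σ 0 = 1) : σ = Equiv.swap 0 1 := by
  have h1 : σ 1 = 0 := by
    have hne : σ 1 ≠ σ 0 := fun hc => absurd (σ.injective hc) (by decide)
    rw [h] at hne
    have hlt := (σ 1).isLt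
    have hne' : ((σ 1 : Fin 2) : ℕ) ≠ 1 := fun hc => hne (Fin.ext hc)
    exact Fin.ext (by omega)
  apply Equiv.ext
  intro x
  have hlt := x.isLt
  rcases (by omega : ((x : Fin 2) : ℕ) = 0 ∨ ((x : Fin 2) : ℕ) = 1) with hx | hx
  · rw [show x = 0 from Fin.ext hx]
    rw [h]
    decide
  · rw [show x = 1 from Fin.ext hx]
    rw [h1]
    decide

lemma sum_forces (h : IsQuot π σ f) (hσ : IsSimple σ) (hm : 2 ≤ m) (hn : 2 ≤ n)
    (hsum : SumDec π) : (⟨m, σ⟩ : PermOf) = ⟨2, Equiv.refl (Fin 2)⟩ := by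
  obtain ⟨d, hd0, hdn, hd⟩ := hsum
  have hn0 : 0 < n := by omega
  set S := univ.filter (fun x : Fin n => (x : ℕ) < d) with hSdef
  have hScont : Contiguous S := by
    intro a b c ha hc hab hbc
    rw [hSdef, mem_filter] at ha hc ⊢
    have h1 := Fin.le_def.mp hab
    have h2 := Fin.le_def.mp hbc
    exact ⟨mem_univ _, by omega⟩
  have hSim : S.image π = univ.filter (fun v : Fin n => (v : ℕ) < d) := by
    ext v
    simp only [hSdef, mem_image, mem_filter, mem_univ, true_and]
    constructor
    · rintro ⟨x, hx, rfl⟩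
      exact (hd x).mp hx
    · intro hv
      refine ⟨π.symm v, ?_, π.apply_symm_apply v⟩
      rw [hd (π.symm v), π.apply_symm_apply]
      exact hv
  have hint : IsPermInterval π S := by
    refine ⟨hScont, ?_⟩
    rw [hSim]
    intro a b c ha hc hab hbc
    rw [mem_filter] at ha hc ⊢
    have h1 := Fin.le_def.mp hab
    have h2 := Fin.le_def.mp hbc
    exact ⟨mem_univ _, by omega⟩
  have hSproper : S ≠ univ := by
    intro hc
    have hmem : (⟨d, hdn⟩ : Fin n) ∈ S := hc ▸ mem_univ _
    rw [hSdef, mem_filter] at hmem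
    exact absurd hmem.2 (by simp)
  by_cases hnf : ∃ i, ∀ x ∈ S, f x = i
  · obtain ⟨i, hi⟩ := hnf
    have h0S : (⟨0, hn0⟩ : Fin n) ∈ S := mem_filter.mpr ⟨mem_univ _, hd0⟩
    have hfi : f ⟨0, hn0⟩ = i := hi _ h0S
    have hival : (i : ℕ) = 0 := by
      rw [← hfi]
      exact mono_surj_min h.1 h.2.1 hn0
    have hmin : (valMap π σ f ⟨0, hn0⟩ : ℕ) = 0 :=
      mono_surj_min (valMap_mono h) (valMap_surj h) hn0
    have hsymm0 : π.symm ⟨0, hn0⟩ ∈ S := by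
      rw [hSdef, mem_filter]
      refine ⟨mem_univ _, ?_⟩
      rw [hd (π.symm ⟨0, hn0⟩), π.apply_symm_apply]
      exact hd0
    have hσi : (σ i : ℕ) = 0 := by
      have heq : valMap π σ f ⟨0, hn0⟩ = σ (f (π.symm ⟨0, hn0⟩)) := rfl
      rw [hi _ hsymm0] at heq
      rw [← heq]
      exact hmin
    set T := univ.filter (fun j : Fin m => j ≠ i) with hTdef
    have hTcont : Contiguous T := by
      intro a b c ha hc hab hbc
      rw [hTdef, mem_filter] at ha ⊢
      refine ⟨mem_univ _, fun hbi => ?_⟩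
      apply ha.2
      have h1 := Fin.le_def.mp hab
      have h2 : (b : ℕ) = 0 := by rw [hbi]; exact hival
      exact Fin.ext (by omega)
    have hTim : T.image σ = univ.filter (fun w : Fin m => w ≠ σ i) := by
      ext w
      simp only [hTdef, mem_image, mem_filter, mem_univ, true_and]
      constructor
      · rintro ⟨j, hj, rfl⟩
        exact fun hc => hj (σ.injective hc)
      · intro hw
        exact ⟨σ.symm w, fun hc => hw (by rw [← hc, σ.apply_symm_apply]),
          σ.apply_symm_apply w⟩
    have hTimcont : Contiguous (T.image σ) := by
      rw [hTim]
      intro a b c ha hc hab hbc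
      rw [mem_filter] at ha ⊢
      refine ⟨mem_univ _, fun hbi => ?_⟩
      apply ha.2
      have h1 := Fin.le_def.mp hab
      have h2 : (b : ℕ) = 0 := by rw [hbi]; exact hσi
      exact Fin.ext (by omega)
    have hTcard : T.card = m - 1 := by
      rw [hTdef, Finset.filter_ne', Finset.card_erase_of_mem (mem_univ i), card_univ,
        Fintype.card_fin]
    have hTc := hσ T ⟨hTcont, hTimcont⟩
    have hm2 : m = 2 := by
      rw [hTcard] at hTc
      omega
    subst hm2
    have hi0 : i = 0 := Fin.ext hival
    have hσ00 : σ 0 = 0 := by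
      rw [hi0] at hσi
      exact Fin.ext hσi
    rw [perm2_refl hσ00]
  · have hm2 := key_two h hσ hm hint hSproper hnf
    subst hm2
    rcases quot_two h hn0 with ⟨h00, _⟩ | ⟨_, hskew⟩
    · rw [perm2_refl h00]
    · exact absurd ⟨⟨d, hd0, hdn, hd⟩, hskew⟩ (not_sum_and_skew hn0)

lemma skew_forces (h : IsQuot π σ f) (hσ : IsSimple σ) (hm : 2 ≤ m) (hn : 2 ≤ n)
    (hskew : SkewDec π) : (⟨m, σ⟩ : PermOf) = ⟨2, Equiv.swap 0 1⟩ := by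
  obtain ⟨d, hd0, hdn, hd⟩ := hskew
  have hn0 : 0 < n := by omega
  set S := univ.filter (fun x : Fin n => (x : ℕ) < d) with hSdef
  have hScont : Contiguous S := by
    intro a b c ha hc hab hbc
    rw [hSdef, mem_filter] at ha hc ⊢
    have h1 := Fin.le_def.mp hab
    have h2 := Fin.le_def.mp hbc
    exact ⟨mem_univ _, by omega⟩
  have hSim : S.image π = univ.filter (fun v : Fin n => n - d ≤ (v : ℕ)) := by
    ext v
    simp only [hSdef, mem_image, mem_filter, mem_univ, true_and]
    constructor
    · rintro ⟨x, hx, rfl⟩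
      exact (hd x).mp hx
    · intro hv
      refine ⟨π.symm v, ?_, π.apply_symm_apply v⟩
      rw [hd (π.symm v), π.apply_symm_apply]
      exact hv
  have hint : IsPermInterval π S := by
    refine ⟨hScont, ?_⟩
    rw [hSim]
    intro a b c ha hc hab hbc
    rw [mem_filter] at ha hc ⊢
    have h1 := Fin.le_def.mp hab
    have h2 := Fin.le_def.mp hbc
    exact ⟨mem_univ _, by omega⟩
  have hSproper : S ≠ univ := by
    intro hc
    have hmem : (⟨d, hdn⟩ : Fin n) ∈ S := hc ▸ mem_univ _
    rw [hSdef, mem_filter] at hmem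
    exact absurd hmem.2 (by simp)
  by_cases hnf : ∃ i, ∀ x ∈ S, f x = i
  · obtain ⟨i, hi⟩ := hnf
    have h0S : (⟨0, hn0⟩ : Fin n) ∈ S := mem_filter.mpr ⟨mem_univ _, hd0⟩
    have hfi : f ⟨0, hn0⟩ = i := hi _ h0S
    have hival : (i : ℕ) = 0 := by
      rw [← hfi]
      exact mono_surj_min h.1 h.2.1 hn0
    have hm0 : 0 < m := by omega
    have hmax : (valMap π σ f ⟨n - 1, by omega⟩ : ℕ) = m - 1 :=
      mono_surj_max (valMap_mono h) (valMap_surj h) hn0 hm0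
    have hsymmtop : π.symm ⟨n - 1, by omega⟩ ∈ S := by
      rw [hSdef, mem_filter]
      refine ⟨mem_univ _, ?_⟩
      rw [hd (π.symm ⟨n - 1, by omega⟩), π.apply_symm_apply]
      simp only
      omega
    have hσi : (σ i : ℕ) = m - 1 := by
      have heq : valMap π σ f ⟨n - 1, by omega⟩ = σ (f (π.symm ⟨n - 1, by omega⟩)) := rfl
      rw [hi _ hsymmtop] at heq
      rw [← heq]
      exact hmax
    set T := univ.filter (fun j : Fin m => j ≠ i) with hTdef
    have hTcont : Contiguous T := by
      intro a b c ha hc hab hbc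
      rw [hTdef, mem_filter] at ha ⊢
      refine ⟨mem_univ _, fun hbi => ?_⟩
      apply ha.2
      have h1 := Fin.le_def.mp hab
      have h2 : (b : ℕ) = 0 := by rw [hbi]; exact hival
      exact Fin.ext (by omega)
    have hTim : T.image σ = univ.filter (fun w : Fin m => w ≠ σ i) := by
      ext w
      simp only [hTdef, mem_image, mem_filter, mem_univ, true_and]
      constructor
      · rintro ⟨j, hj, rfl⟩
        exact fun hc => hj (σ.injective hc)
      · intro hw
        exact ⟨σ.symm w, fun hc => hw (by rw [← hc, σ.apply_symm_apply]),
          σ.apply_symm_apply w⟩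
    have hTimcont : Contiguous (T.image σ) := by
      rw [hTim]
      intro a b c ha hc hab hbc
      rw [mem_filter] at hc ⊢
      refine ⟨mem_univ _, fun hbi => ?_⟩
      apply hc.2
      have h1 := Fin.le_def.mp hbc
      have h2 : (b : ℕ) = m - 1 := by rw [hbi]; exact hσi
      have h3 := c.isLt
      exact Fin.ext (by omega)
    have hTcard : T.card = m - 1 := by
      rw [hTdef, Finset.filter_ne', Finset.card_erase_of_mem (mem_univ i), card_univ,
        Fintype.card_fin]
    have hTc := hσ T ⟨hTcont, hTimcont⟩
    have hm2 : m = 2 := by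
      rw [hTcard] at hTc
      omega
    subst hm2
    have hi0 : i = 0 := Fin.ext hival
    have hσ01 : σ 0 = 1 := by
      rw [hi0] at hσi
      exact Fin.ext hσi
    rw [perm2_swap hσ01]
  · have hm2 := key_two h hσ hm hint hSproper hnf
    subst hm2
    rcases quot_two h hn0 with ⟨_, hsum⟩ | ⟨h01, _⟩
    · exact absurd ⟨hsum, ⟨d, hd0, hdn, hd⟩⟩ (not_sum_and_skew hn0)
    · rw [perm2_swap h01]

end Forces


section Uniqueness
variable {π : Equiv.Perm (Fin n)}

lemma quot_uniq {m m' : ℕ} {σ : Equiv.Perm (Fin m)} {σ' : Equiv.Perm (Fin m')}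
    {f : Fin n → Fin m} {f' : Fin n → Fin m'}
    (h : IsQuot π σ f) (h' : IsQuot π σ' f') (hσ : IsSimple σ) (hσ' : IsSimple σ')
    (hm : 2 ≤ m) (hm' : 2 ≤ m') (hn : 2 ≤ n) :
    (⟨m, σ⟩ : PermOf) = (⟨m', σ'⟩ : PermOf) := by
  have hn0 : 0 < n := by omega
  by_cases hsum : SumDec π
  · rw [sum_forces h hσ hm hn hsum, sum_forces h' hσ' hm' hn hsum]
  by_cases hskew : SkewDec π
  · rw [skew_forces h hσ hm hn hskew, skew_forces h' hσ' hm' hn hskew]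
  -- neither: the fibers of f and f' mutually refine, hence coincide
  have refine_lemma : ∀ {μ : ℕ} {τ : Equiv.Perm (Fin μ)} {g : Fin n → Fin μ}
      {μ' : ℕ} {τ' : Equiv.Perm (Fin μ')} {g' : Fin n → Fin μ'},
      IsQuot π τ g → IsQuot π τ' g' → IsSimple τ → 2 ≤ μ → 2 ≤ μ' →
      ∀ x y : Fin n, g' x = g' y → g x = g y := by
    intro μ τ g μ' τ' g' hq hq' hτ hμ hμ' x y hxy
    -- the fiber of g' containing x is an interval of π not equal to univ
    have hint := fiber_interval hq' (g' x)
    have hproper : univ.filter (fun z => g' z = g' x) ≠ univ := by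
      intro hc
      have hone : ∃ j : Fin μ', j ≠ g' x := by
        rcases (by omega : ((g' x : Fin μ') : ℕ) = 0 ∨ 0 < ((g' x : Fin μ') : ℕ)) with hx0 | hx0
        · refine ⟨⟨1, by omega⟩, fun hc' => ?_⟩
          have hval : (1 : ℕ) = ((g' x : Fin μ') : ℕ) := congrArg Fin.val hc'
          omega
        · refine ⟨⟨0, by omega⟩, fun hc' => ?_⟩
          have hval : (0 : ℕ) = ((g' x : Fin μ') : ℕ) := congrArg Fin.val hc'
          omega
      obtain ⟨j, hj⟩ := hone
      obtain ⟨z, hz⟩ := hq'.2.1 j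
      have hmem : z ∈ univ.filter (fun z => g' z = g' x) := by
        rw [hc]
        exact mem_univ z
      rw [mem_filter] at hmem
      rw [hmem.2] at hz
      exact hj hz.symm
    by_cases hnf : ∃ i, ∀ z ∈ univ.filter (fun z => g' z = g' x), g z = i
    · obtain ⟨i, hi⟩ := hnf
      have hx : g x = i := hi x (mem_filter.mpr ⟨mem_univ _, rfl⟩)
      have hy : g y = i := hi y (mem_filter.mpr ⟨mem_univ _, hxy.symm⟩)
      rw [hx, hy]
    · have hμ2 := key_two hq hτ hμ hint hproper hnf
      subst hμ2
      rcases quot_two hq hn0 with ⟨_, hs⟩ | ⟨_, hs⟩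
      · exact absurd hs hsum
      · exact absurd hs hskew
  have hr1 : ∀ x y : Fin n, f' x = f' y → f x = f y :=
    refine_lemma h h' hσ hm hm'
  have hr2 : ∀ x y : Fin n, f x = f y → f' x = f' y :=
    refine_lemma h' h hσ' hm' hm
  -- build the strictly monotone comparison map
  obtain ⟨hmono, hsurj, hcross⟩ := h
  obtain ⟨hmono', hsurj', hcross'⟩ := h'
  set kk : Fin m → Fin m' := fun i => f' (surjInv hsurj i) with hkkdef
  have hcomp : ∀ x : Fin n, kk (f x) = f' x := by
    intro x
    apply hr2
    exact surjInv_eq hsurj (f x)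
  have hkmono : StrictMono kk := by
    intro i j hij
    rw [hkkdef]
    set x := surjInv hsurj i with hxdef
    set y := surjInv hsurj j with hydef
    have hfx : f x = i := surjInv_eq hsurj i
    have hfy : f y = j := surjInv_eq hsurj j
    have hfne : f x ≠ f y := by rw [hfx, hfy]; exact hij.ne
    have hxy : x < y := by
      rw [mono_cross hmono hfne, hfx, hfy]
      exact hij
    have hfne' : f' x ≠ f' y := fun hc => hfne (hr1 x y hc)
    rw [← mono_cross hmono' hfne']
    exact hxy
  have hksurj : Surjective kk := by
    intro j'
    obtain ⟨x, hx⟩ := hsurj' j'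
    exact ⟨f x, by rw [hcomp x, hx]⟩
  have hmm' : m = m' := by
    have h1 : m ≤ m' := by
      have := Fintype.card_le_of_injective kk hkmono.injective
      simpa using this
    have h2 : m' ≤ m := by
      have := Fintype.card_le_of_surjective kk hksurj
      simpa using this
    omega
  subst hmm'
  have hkid : kk = id := strictMono_fin_id hkmono
  have hff' : f' = f := by
    funext x
    rw [← hcomp x, hkid]
    rfl
  have hσσ' : σ' = σ := by
    have hsm : StrictMono (fun a => σ' (σ.symm a)) := by
      intro a b hab
      set i := σ.symm a with hidef
      set j := σ.symm b with hjdef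
      have hij : i ≠ j := by
        intro hc
        apply hab.ne
        rw [hidef, hjdef] at hc
        simpa using congrArg σ hc
      obtain ⟨x, hx⟩ := hsurj i
      obtain ⟨y, hy⟩ := hsurj j
      have hfne : f x ≠ f y := by rw [hx, hy]; exact hij
      have hπ : π x < π y := by
        rw [hcross x y hfne, hx, hy, hidef, hjdef]
        simpa using hab
      have hfne' : f' x ≠ f' y := by rw [hff', hx, hy]; exact hij
      have := (hcross' x y hfne').mp hπ
      rw [hff', hx, hy] at this
      exact this
    have := strictMono_fin_id hsm
    apply Equiv.ext
    intro x
    have happ := congrFun this (σ x)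
    simpa using happ
  rw [hσσ']

end Uniqueness


section Existence

lemma quot_id (π : Equiv.Perm (Fin n)) : IsQuot π π id :=
  ⟨monotone_id, surjective_id, fun _ _ _ => Iff.rfl⟩

lemma quot_comp {n1 n2 n3 : ℕ} {π1 : Equiv.Perm (Fin n1)} {π2 : Equiv.Perm (Fin n2)}
    {σ : Equiv.Perm (Fin n3)} {f1 : Fin n1 → Fin n2} {f2 : Fin n2 → Fin n3}
    (h1 : IsQuot π1 π2 f1) (h2 : IsQuot π2 σ f2) : IsQuot π1 σ (f2 ∘ f1) := by
  obtain ⟨m1, s1, c1⟩ := h1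
  obtain ⟨m2, s2, c2⟩ := h2
  refine ⟨m2.comp m1, s2.comp s1, ?_⟩
  intro x y hxy
  have hne : f1 x ≠ f1 y := fun hc => hxy (by
    show f2 (f1 x) = f2 (f1 y)
    rw [hc])
  rw [c1 x y hne]
  exact c2 (f1 x) (f1 y) hxy

lemma exists_quot : ∀ N n : ℕ, n ≤ N → 2 ≤ n → ∀ π : Equiv.Perm (Fin n),
    ∃ (m : ℕ) (σ : Equiv.Perm (Fin m)) (f : Fin n → Fin m),
      2 ≤ m ∧ IsSimple σ ∧ IsQuot π σ f := by
  intro N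
  induction N with
  | zero =>
    intro n hn h2
    omega
  | succ N ih =>
    intro n hn h2 π
    by_cases hsimple : IsSimple π
    · exact ⟨n, π, id, h2, hsimple, quot_id π⟩
    rw [IsSimple] at hsimple
    push_neg at hsimple
    obtain ⟨S, hint, hc0, hc1, hcn⟩ := hsimple
    have htn : S.card ≤ n := by
      have := card_le_univ S
      simpa using this
    set t := S.card with htdef
    have ht2 : 2 ≤ t := by omega
    have htlt : t < n := by omega
    have hSne : S.Nonempty := Finset.card_pos.mp (by omega)
    obtain ⟨a, ha, hmemS⟩ := contiguous_char hint.1 hSne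
    have himcard : (S.image π).card = t := Finset.card_image_of_injective _ π.injective
    have himne : (S.image π).Nonempty := by
      rw [← Finset.card_pos, himcard]
      omega
    obtain ⟨u, hu0, hmemV0⟩ := contiguous_char hint.2 himne
    rw [himcard] at hu0
    have hmemV : ∀ v : Fin n, v ∈ S.image π ↔ u ≤ (v : ℕ) ∧ (v : ℕ) < u + t := by
      intro v
      rw [hmemV0 v, himcard]
    have hPS : ∀ x : Fin n, x ∈ S ↔ π x ∈ S.image π := by
      intro x
      constructor
      · exact fun hx => mem_image_of_mem π hx
      · intro hx
        obtain ⟨y, hy, hyx⟩ := mem_image.mp hx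
        rwa [← π.injective hyx]
    have hblock : ∀ x : Fin n, (a ≤ (x : ℕ) ∧ (x : ℕ) < a + t) ↔
        (u ≤ (π x : ℕ) ∧ (π x : ℕ) < u + t) := by
      intro x
      rw [← hmemS, hPS, hmemV]
    set n' := n - t + 1 with hn'def
    have hn'2 : 2 ≤ n' := by omega
    have hn'lt : n' < n := by omega
    -- the contraction maps
    set f1 : Fin n → Fin n' := fun x =>
      ⟨min (x : ℕ) a + ((x : ℕ) - (a + t - 1)), by
        have hx := x.isLt
        omega⟩ with hf1def
    have hf1val : ∀ x : Fin n, ((f1 x : Fin n') : ℕ) =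
        min (x : ℕ) a + ((x : ℕ) - (a + t - 1)) := fun x => rfl
    set lift : Fin n' → Fin n := fun z =>
      ⟨if (z : ℕ) ≤ a then (z : ℕ) else (z : ℕ) + (t - 1), by
        have hz := z.isLt
        split_ifs <;> omega⟩ with hliftdef
    have hliftval : ∀ z : Fin n', ((lift z : Fin n) : ℕ) =
        if (z : ℕ) ≤ a then (z : ℕ) else (z : ℕ) + (t - 1) := fun z => rfl
    have hliftinj : Function.Injective lift := by
      intro z1 z2 hz
      have hv := congrArg Fin.val hz
      rw [hliftval, hliftval] at hv
      apply Fin.ext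
      split_ifs at hv <;> omega
    have hlift_f1 : ∀ z : Fin n', f1 (lift z) = z := by
      intro z
      apply Fin.ext
      rw [hf1val, hliftval]
      have hz := z.isLt
      split_ifs <;> omega
    have hlift_range : ∀ z : Fin n', ((lift z : Fin n) : ℕ) ≤ a ∨
        a + t ≤ ((lift z : Fin n) : ℕ) := by
      intro z
      rw [hliftval]
      split_ifs <;> omega
    set cV : ℕ → ℕ := fun w => min w u + (w - (u + t - 1)) with hcVdef
    have hcV : ∀ w1 w2 : ℕ, ¬((u ≤ w1 ∧ w1 < u + t) ∧ (u ≤ w2 ∧ w2 < u + t)) →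
        (w1 < w2 ↔ cV w1 < cV w2) := by
      intro w1 w2 hno
      rw [hcVdef]
      simp only
      omega
    have hcVblock : ∀ w : ℕ, u ≤ w → w < u + t → cV w = u := by
      intro w h1 h2
      rw [hcVdef]
      simp only
      omega
    set p' : Fin n' → Fin n' := fun z =>
      ⟨cV ((π (lift z) : Fin n) : ℕ), by
        have hb := (π (lift z)).isLt
        rw [hcVdef]
        simp only
        omega⟩ with hp'def
    have hp'val : ∀ z : Fin n', ((p' z : Fin n') : ℕ) = cV ((π (lift z) : Fin n) : ℕ) :=
      fun z => rfl
    have hp'inj : Function.Injective p' := by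
      intro z1 z2 hz
      have hv := congrArg Fin.val hz
      rw [hp'val, hp'val] at hv
      by_contra hne
      have hlne : lift z1 ≠ lift z2 := fun hc => hne (hliftinj hc)
      have hwne : π (lift z1) ≠ π (lift z2) := fun hc => hlne (π.injective hc)
      set w1 := ((π (lift z1) : Fin n) : ℕ)
      set w2 := ((π (lift z2) : Fin n) : ℕ)
      have hwne' : w1 ≠ w2 := fun hc => hwne (Fin.ext hc)
      by_cases hboth : (u ≤ w1 ∧ w1 < u + t) ∧ (u ≤ w2 ∧ w2 < u + t)
      · -- both lifted positions are in S, hence both are equal to a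
        have hin1 : lift z1 ∈ S := (hPS _).mpr ((hmemV _).mpr hboth.1)
        have hin2 : lift z2 ∈ S := (hPS _).mpr ((hmemV _).mpr hboth.2)
        rw [hmemS] at hin1 hin2
        have hr1 := hlift_range z1
        have hr2 := hlift_range z2
        have : lift z1 = lift z2 := Fin.ext (by omega)
        exact hlne this
      · rcases lt_trichotomy w1 w2 with hc | hc | hc
        · rw [hcV w1 w2 hboth] at hc
          omega
        · exact hwne' hc
        · rw [hcV w2 w1 (fun hcc => hboth ⟨hcc.2, hcc.1⟩)] at hc
          omega
    have hp'bij : Function.Bijective p' := (Finite.injective_iff_bijective).mp hp'inj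
    set π' : Equiv.Perm (Fin n') := Equiv.ofBijective p' hp'bij with hπ'def
    have hπ'app : ∀ z, π' z = p' z := fun z => rfl
    -- f1 is a quotient map from π to π'
    have hq1 : IsQuot π π' f1 := by
      refine ⟨?_, ?_, ?_⟩
      · intro x y hxy
        rw [Fin.le_def, hf1val, hf1val]
        have := Fin.le_def.mp hxy
        omega
      · intro z
        exact ⟨lift z, hlift_f1 z⟩
      · intro x y hxy
        -- x and y are not both in S
        have hnotboth : ¬(x ∈ S ∧ y ∈ S) := by
          rintro ⟨hx, hy⟩
          rw [hmemS] at hx hy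
          apply hxy
          apply Fin.ext
          rw [hf1val, hf1val]
          omega
        have hrep : ∀ x : Fin n, cV ((π (lift (f1 x)) : Fin n) : ℕ) = cV ((π x : Fin n) : ℕ) := by
          intro x
          by_cases hxS : a ≤ (x : ℕ) ∧ (x : ℕ) < a + t
          · have hf1a : ((f1 x : Fin n') : ℕ) = a := by
              rw [hf1val]
              omega
            have hla : ((lift (f1 x) : Fin n) : ℕ) = a := by
              rw [hliftval, hf1a]
              simp
            have hin1 : lift (f1 x) ∈ S := by
              rw [hmemS, hla]
              omega
            have hin2 : (x : Fin n) ∈ S := by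
              rw [hmemS]
              omega
            have hb1 := (hblock _).mp (by rw [hla]; omega)
            have hb2 := (hblock _).mp hxS
            rw [hcVblock _ hb1.1 hb1.2, hcVblock _ hb2.1 hb2.2]
          · have hlx : lift (f1 x) = x := by
              apply Fin.ext
              rw [hliftval, hf1val]
              have hxlt := x.isLt
              split_ifs <;> omega
            rw [hlx]
        have hval : ∀ x y : Fin n, (π' (f1 x) < π' (f1 y)) ↔
            (cV ((π x : Fin n) : ℕ) < cV ((π y : Fin n) : ℕ)) := by
          intro x y
          rw [Fin.lt_def, hπ'app, hπ'app, hp'val, hp'val, hrep, hrep]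
        rw [hval]
        have hnb : ¬((u ≤ ((π x : Fin n) : ℕ) ∧ ((π x : Fin n) : ℕ) < u + t) ∧
            (u ≤ ((π y : Fin n) : ℕ) ∧ ((π y : Fin n) : ℕ) < u + t)) := by
          rintro ⟨hbx, hby⟩
          exact hnotboth ⟨(hPS x).mpr ((hmemV _).mpr hbx), (hPS y).mpr ((hmemV _).mpr hby)⟩
        rw [Fin.lt_def]
        exact hcV _ _ hnb
    obtain ⟨m, σ, f2, hm, hσ, hq2⟩ := ih n' (by omega) hn'2 π'
    exact ⟨m, σ, f2 ∘ f1, hm, hσ, quot_comp hq1 hq2⟩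

end Existence

end USI

/-- Every permutation of length at least 2 (i.e. every permutation other than the
permutation of length 1) is the inflation of a unique simple permutation of length ≥ 2. -/
theorem unique_simple_inflation (π : PermOf) (hπ : 2 ≤ π.1) :
    ∃! s : PermOf, 2 ≤ s.1 ∧ IsSimple s.2 ∧
      ∃ (k : Fin s.1 → ℕ) (α : ∀ i, Equiv.Perm (Fin (k i))),
        (∀ i, 0 < k i) ∧ IsInflation π.2 s.2 k α := by
  obtain ⟨n, π⟩ := π
  simp only at hπ
  obtain ⟨m, σ, f, hm, hσ, hq⟩ := USI.exists_quot n n le_rfl hπ π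
  refine ⟨⟨m, σ⟩, ⟨hm, hσ, USI.isInflation_of_isQuot hq⟩, ?_⟩
  rintro ⟨m', σ'⟩ ⟨hm', hσ', k', α', hk', hinf'⟩
  obtain ⟨f', hq'⟩ := USI.isQuot_of_isInflation hk' hinf'
  exact USI.quot_uniq hq' hq hσ' hσ hm' hm hπ
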